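/- Let Φ be a unital quantum channel on M_n. Then every element of Φ^C(M(Φ)) commutes with every element of Φ^C(M(Φ^C)), where M(·) denotes multiplicative domain. -/
import Mathlib


open Matrix ComplexOrder

/-- The completely positive map with Kraus operators `V i`. -/
noncomputable def krausMap {d n m : ℕ} (V : Fin d → Matrix (Fin m) (Fin n) ℂ) :
    Matrix (Fin n) (Fin n) ℂ →ₗ[ℂ] Matrix (Fin m) (Fin m) ℂ where
  toFun X := ∑ i, V i * X * (V i)ᴴ
  map_add' X Y := by simp [Matrix.mul_add, Matrix.add_mul, Finset.sum_add_distrib]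
  map_smul' c X := by simp [Matrix.mul_smul, Matrix.smul_mul, Finset.smul_sum]

/-- The complementary map `Φ^C(ρ) = ∑_{i,j} tr(ρ V_j* V_i) E_{ij}`. -/
noncomputable def complMap {d n m : ℕ} (V : Fin d → Matrix (Fin m) (Fin n) ℂ) :
    Matrix (Fin n) (Fin n) ℂ →ₗ[ℂ] Matrix (Fin d) (Fin d) ℂ where
  toFun X := Matrix.of fun i j => (X * ((V j)ᴴ * V i)).trace
  map_add' X Y := by
    ext i j
    simp [Matrix.add_mul]
  map_smul' c X := by
    ext i j
    simp [Matrix.smul_mul]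

/-- The compression map `P_Q(X) = Q X Q`. -/
noncomputable def comprMap {n : ℕ} (Q : Matrix (Fin n) (Fin n) ℂ) :
    Matrix (Fin n) (Fin n) ℂ →ₗ[ℂ] Matrix (Fin n) (Fin n) ℂ where
  toFun X := Q * X * Q
  map_add' X Y := by simp [Matrix.mul_add, Matrix.add_mul]
  map_smul' c X := by simp [Matrix.mul_smul, Matrix.smul_mul]

/-- The orthogonal complement of a set of matrices with respect to the trace
(Hilbert–Schmidt) inner product `⟨A, B⟩ = tr(A* B)`. -/
noncomputable def traceOrthCompl {n : ℕ} (S : Set (Matrix (Fin n) (Fin n) ℂ)) :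
    Submodule ℂ (Matrix (Fin n) (Fin n) ℂ) where
  carrier := {X | ∀ A ∈ S, (Aᴴ * X).trace = 0}
  add_mem' := by
    intro a b ha hb A hA
    simp [Matrix.mul_add, ha A hA, hb A hA]
  zero_mem' := by intro A hA; simp
  smul_mem' := by
    intro c x hx A hA
    simp [Matrix.mul_smul, hx A hA]

/-- The commutant of a set of matrices, as a submodule of `M_n`. -/
noncomputable def commutantSub {n : ℕ} (S : Set (Matrix (Fin n) (Fin n) ℂ)) :
    Submodule ℂ (Matrix (Fin n) (Fin n) ℂ) where
  carrier := {X | ∀ A ∈ S, X * A = A * X}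
  add_mem' := by
    intro a b ha hb A hA
    simp [Matrix.mul_add, Matrix.add_mul, ha A hA, hb A hA]
  zero_mem' := by intro A hA; simp
  smul_mem' := by
    intro c x hx A hA
    simp [Matrix.mul_smul, Matrix.smul_mul, hx A hA]

/-- The multiplicative domain of a linear map on `M_n`, as a set. -/
noncomputable def multDomain {n m : ℕ}
    (Φ : Matrix (Fin n) (Fin n) ℂ →ₗ[ℂ] Matrix (Fin m) (Fin m) ℂ) :
    Set (Matrix (Fin n) (Fin n) ℂ) :=
  {A | ∀ X, Φ (A * X) = Φ A * Φ X ∧ Φ (X * A) = Φ X * Φ A}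

lemma krausMap_conjTranspose {d n m : ℕ} (V : Fin d → Matrix (Fin m) (Fin n) ℂ)
    (A : Matrix (Fin n) (Fin n) ℂ) : (krausMap V A)ᴴ = krausMap V Aᴴ := by
  simp [krausMap, Matrix.conjTranspose_sum, Matrix.conjTranspose_mul, Matrix.mul_assoc]

lemma sum_mul_conjTranspose_self_eq_zero {d n m : ℕ} (S : Fin d → Matrix (Fin n) (Fin m) ℂ)
    (h : ∑ i, S i * (S i)ᴴ = 0) : ∀ i, S i = 0 := by
  have htr : ∑ i, (S i * (S i)ᴴ).trace = 0 := by
    rw [← Matrix.trace_sum, h, Matrix.trace_zero]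
  have key : ∑ i, ∑ a, ∑ b, Complex.normSq (S i a b) = 0 := by
    have := congrArg Complex.re htr
    simpa [Matrix.trace, Matrix.diag, Matrix.mul_apply, Matrix.conjTranspose_apply,
      Complex.mul_conj] using this
  intro i
  have h1 := (Finset.sum_eq_zero_iff_of_nonneg (fun i _ => Finset.sum_nonneg fun _ _ => Finset.sum_nonneg fun _ _ => Complex.normSq_nonneg _)).mp key i
    (Finset.mem_univ i)
  ext a b
  have h2 := (Finset.sum_eq_zero_iff_of_nonneg (fun a _ => Finset.sum_nonneg fun _ _ => Complex.normSq_nonneg _)).mp h1 a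
    (Finset.mem_univ a)
  have h3 := (Finset.sum_eq_zero_iff_of_nonneg (fun b _ => Complex.normSq_nonneg _)).mp h2 b
    (Finset.mem_univ b)
  simpa using Complex.normSq_eq_zero.mp h3

lemma kraus_intertwine {d n : ℕ} (V : Fin d → Matrix (Fin n) (Fin n) ℂ)
    (hV' : ∑ i, V i * (V i)ᴴ = 1) (A : Matrix (Fin n) (Fin n) ℂ)
    (h : krausMap V (A * Aᴴ) = krausMap V A * krausMap V Aᴴ) :
    ∀ i, V i * A = krausMap V A * V i := by
  have expand : ∀ i, (V i * A - krausMap V A * V i) * (V i * A - krausMap V A * V i)ᴴ =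
      V i * (A * Aᴴ) * (V i)ᴴ - (V i * A * (V i)ᴴ) * (krausMap V A)ᴴ
        - krausMap V A * (V i * Aᴴ * (V i)ᴴ) + krausMap V A * (V i * (V i)ᴴ) * (krausMap V A)ᴴ := by
    intro i
    simp only [Matrix.conjTranspose_sub, Matrix.conjTranspose_mul, Matrix.sub_mul,
      Matrix.mul_sub, krausMap_conjTranspose]
    noncomm_ring [krausMap_conjTranspose]
  have hsum : ∑ i, (V i * A - krausMap V A * V i) * (V i * A - krausMap V A * V i)ᴴ = 0 := by
    rw [Finset.sum_congr rfl (fun i _ => expand i)]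
    rw [Finset.sum_add_distrib, Finset.sum_sub_distrib, Finset.sum_sub_distrib,
      ← Finset.sum_mul, ← Finset.mul_sum, ← Finset.sum_mul, ← Finset.mul_sum]
    rw [hV']
    have h1 : ∑ i, V i * (A * Aᴴ) * (V i)ᴴ = krausMap V (A * Aᴴ) := rfl
    have h2 : ∑ i, V i * A * (V i)ᴴ = krausMap V A := rfl
    have h3 : ∑ i, V i * Aᴴ * (V i)ᴴ = krausMap V Aᴴ := rfl
    rw [h1, h2, h3, h, krausMap_conjTranspose, Matrix.mul_one]
    noncomm_ring
  intro i
  have := sum_mul_conjTranspose_self_eq_zero _ hsum i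
  linear_combination (norm := noncomm_ring) this

lemma multDomain_commute {d n : ℕ} (V : Fin d → Matrix (Fin n) (Fin n) ℂ)
    (hV' : ∑ i, V i * (V i)ᴴ = 1) (A : Matrix (Fin n) (Fin n) ℂ)
    (hA : A ∈ multDomain (krausMap V)) (i j : Fin d) :
    A * ((V j)ᴴ * V i) = ((V j)ᴴ * V i) * A := by
  have h1 : ∀ i, V i * A = krausMap V A * V i :=
    kraus_intertwine V hV' A (hA Aᴴ).1
  have h2 : ∀ i, V i * Aᴴ = krausMap V Aᴴ * V i := by
    apply kraus_intertwine V hV' Aᴴ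
    simpa using (hA Aᴴ).2
  have h3 : A * (V j)ᴴ = (V j)ᴴ * krausMap V A := by
    have := congrArg Matrix.conjTranspose (h2 j)
    simpa [Matrix.conjTranspose_mul, krausMap_conjTranspose] using this
  calc A * ((V j)ᴴ * V i) = (A * (V j)ᴴ) * V i := by rw [Matrix.mul_assoc]
    _ = (V j)ᴴ * (krausMap V A * V i) := by rw [h3, Matrix.mul_assoc]
    _ = (V j)ᴴ * (V i * A) := by rw [h1]
    _ = ((V j)ᴴ * V i) * A := by rw [Matrix.mul_assoc]

lemma complMap_comm {d n : ℕ} (V : Fin d → Matrix (Fin n) (Fin n) ℂ)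
    (hV' : ∑ i, V i * (V i)ᴴ = 1) (A : Matrix (Fin n) (Fin n) ℂ)
    (hA : A ∈ multDomain (krausMap V)) (X : Matrix (Fin n) (Fin n) ℂ) :
    complMap V (A * X) = complMap V (X * A) := by
  ext i j
  show ((A * X) * ((V j)ᴴ * V i)).trace = ((X * A) * ((V j)ᴴ * V i)).trace
  conv_rhs => rw [Matrix.mul_assoc, multDomain_commute V hV' A hA i j, ← Matrix.mul_assoc,
    Matrix.trace_mul_comm, ← Matrix.mul_assoc]

/-- for a unital channel `Φ`, every element of `Φ^C(M(Φ))` commutes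
with every element of `Φ^C(M(Φ^C))`. -/
theorem stmt_12 {d n : ℕ} (V : Fin d → Matrix (Fin n) (Fin n) ℂ)
    (hV : ∑ i, (V i)ᴴ * V i = 1) (hV' : ∑ i, V i * (V i)ᴴ = 1) :
    ∀ A ∈ multDomain (krausMap V), ∀ B ∈ multDomain (complMap V),
      complMap V A * complMap V B = complMap V B * complMap V A := by
  intro A hA B hB
  rw [← (hB A).2, ← (hB A).1, complMap_comm V hV' A hA B]
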